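/- Let A, B, P be one-variable formal power series over ℂ. If A∘P, B∘P, and (AB)∘P all exist, then (A∘P)(B∘P) = (AB)∘P. -/

import Mathlib

open Filter Finset Topology

private lemma rd_term_zero {u : ℕ → ℂ} {l : ℂ}
    (h : Tendsto (fun N => ∑ n ∈ Finset.range N, u n) atTop (nhds l)) :
    Tendsto u atTop (nhds 0) := by
  have h2 := (h.comp (tendsto_add_atTop_nat 1)).sub h
  simp only [sub_self] at h2
  refine h2.congr fun n => ?_
  simp [Function.comp, Finset.sum_range_succ]

private lemma rd_summable_norm {u : ℕ → ℂ} {l : ℂ}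
    (h : Tendsto (fun N => ∑ n ∈ Finset.range N, u n) atTop (nhds l))
    {z : ℂ} (hz : ‖z‖ < 1) : Summable (fun i => ‖u i * z ^ i‖) := by
  obtain hC := (rd_term_zero h).norm.bddAbove_range
  obtain ⟨C, hC⟩ := hC
  refine Summable.of_nonneg_of_le (fun i => norm_nonneg _) (fun i => ?_)
    ((summable_geometric_of_lt_one (norm_nonneg z) hz).mul_left C)
  rw [norm_mul, norm_pow]
  exact mul_le_mul_of_nonneg_right (hC (Set.mem_range_self i))
    (pow_nonneg (norm_nonneg z) i)

theorem right_distributive_law_complex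
    (A B P : PowerSeries ℂ) (FA FB FC : ℕ → ℂ)
    (hAP : ∀ m, Tendsto (fun N => ∑ n ∈ Finset.range N,
      PowerSeries.coeff n A * PowerSeries.coeff m (P ^ n)) atTop (nhds (FA m)))
    (hBP : ∀ m, Tendsto (fun N => ∑ n ∈ Finset.range N,
      PowerSeries.coeff n B * PowerSeries.coeff m (P ^ n)) atTop (nhds (FB m)))
    (hABP : ∀ m, Tendsto (fun N => ∑ n ∈ Finset.range N,
      PowerSeries.coeff n (A * B) * PowerSeries.coeff m (P ^ n)) atTop (nhds (FC m))) :
    ∀ m, ∑ j ∈ Finset.range (m + 1), FA j * FB (m - j) = FC m := by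
  intro m
  set L : Filter ℂ := (𝓝[<] (1 : ℝ)).map Complex.ofReal with hL
  have hLne : L.NeBot := Filter.map_neBot
  have hz1 : ∀ᶠ z in L, ‖z‖ < 1 := by
    rw [hL, eventually_map]
    filter_upwards [Ioo_mem_nhdsLT_of_mem (Set.right_mem_Ioc.mpr one_pos)] with x hx
    rw [Complex.norm_real, Real.norm_eq_abs, abs_lt]
    exact ⟨by linarith [hx.1], hx.2⟩
  -- Abel limits
  have limA : ∀ j, Tendsto (fun z : ℂ => ∑' n : ℕ,
      (PowerSeries.coeff n A * PowerSeries.coeff j (P ^ n)) * z ^ n) L (nhds (FA j)) :=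
    fun j => Complex.tendsto_tsum_powerSeries_nhdsWithin_lt (hAP j)
  have limB : ∀ j, Tendsto (fun z : ℂ => ∑' n : ℕ,
      (PowerSeries.coeff n B * PowerSeries.coeff j (P ^ n)) * z ^ n) L (nhds (FB j)) :=
    fun j => Complex.tendsto_tsum_powerSeries_nhdsWithin_lt (hBP j)
  have limC : Tendsto (fun z : ℂ => ∑' n : ℕ,
      (PowerSeries.coeff n (A * B) * PowerSeries.coeff m (P ^ n)) * z ^ n) L
      (nhds (FC m)) := Complex.tendsto_tsum_powerSeries_nhdsWithin_lt (hABP m)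
  have limLHS : Tendsto (fun z : ℂ => ∑ j ∈ Finset.range (m + 1),
      (∑' n : ℕ, (PowerSeries.coeff n A * PowerSeries.coeff j (P ^ n)) * z ^ n) *
      (∑' n : ℕ, (PowerSeries.coeff n B * PowerSeries.coeff (m - j) (P ^ n)) * z ^ n)) L
      (nhds (∑ j ∈ Finset.range (m + 1), FA j * FB (m - j))) :=
    tendsto_finset_sum _ fun j _ => (limA j).mul (limB (m - j))
  -- the analytic identity inside the unit disc
  have hEq : ∀ᶠ z in L, (∑ j ∈ Finset.range (m + 1),
      (∑' n : ℕ, (PowerSeries.coeff n A * PowerSeries.coeff j (P ^ n)) * z ^ n) *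
      (∑' n : ℕ, (PowerSeries.coeff n B * PowerSeries.coeff (m - j) (P ^ n)) * z ^ n)) =
      ∑' n : ℕ, (PowerSeries.coeff n (A * B) * PowerSeries.coeff m (P ^ n)) * z ^ n := by
    filter_upwards [hz1] with z hz
    have hsA : ∀ j, Summable (fun i : ℕ =>
        ‖(PowerSeries.coeff i A * PowerSeries.coeff j (P ^ i)) * z ^ i‖) :=
      fun j => rd_summable_norm (hAP j) hz
    have hsB : ∀ j, Summable (fun i : ℕ =>
        ‖(PowerSeries.coeff i B * PowerSeries.coeff j (P ^ i)) * z ^ i‖) :=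
      fun j => rd_summable_norm (hBP j) hz
    calc
      (∑ j ∈ Finset.range (m + 1),
          (∑' n : ℕ, (PowerSeries.coeff n A * PowerSeries.coeff j (P ^ n)) * z ^ n) *
          (∑' n : ℕ, (PowerSeries.coeff n B * PowerSeries.coeff (m - j) (P ^ n)) * z ^ n))
        = ∑ j ∈ Finset.range (m + 1), ∑' n : ℕ, ∑ kl ∈ antidiagonal n,
            ((PowerSeries.coeff kl.1 A * PowerSeries.coeff j (P ^ kl.1)) * z ^ kl.1) *
            ((PowerSeries.coeff kl.2 B * PowerSeries.coeff (m - j) (P ^ kl.2)) * z ^ kl.2) := by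
          refine Finset.sum_congr rfl fun j _ => ?_
          exact tsum_mul_tsum_eq_tsum_sum_antidiagonal_of_summable_norm (hsA j) (hsB (m - j))
      _ = ∑' n : ℕ, ∑ j ∈ Finset.range (m + 1), ∑ kl ∈ antidiagonal n,
            ((PowerSeries.coeff kl.1 A * PowerSeries.coeff j (P ^ kl.1)) * z ^ kl.1) *
            ((PowerSeries.coeff kl.2 B * PowerSeries.coeff (m - j) (P ^ kl.2)) * z ^ kl.2) := by
          refine (Summable.tsum_finsetSum fun j _ => ?_).symm
          exact (summable_norm_sum_mul_antidiagonal_of_summable_norm (hsA j) (hsB (m - j))).of_norm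
      _ = ∑' n : ℕ, (PowerSeries.coeff n (A * B) * PowerSeries.coeff m (P ^ n)) * z ^ n := by
          refine tsum_congr fun n => ?_
          rw [Finset.sum_comm, PowerSeries.coeff_mul, Finset.sum_mul, Finset.sum_mul]
          refine Finset.sum_congr rfl fun kl hkl => ?_
          have hn : kl.1 + kl.2 = n := Finset.HasAntidiagonal.mem_antidiagonal.mp hkl
          have hPm : (PowerSeries.coeff m) (P ^ n) =
              ∑ j ∈ Finset.range (m + 1),
                PowerSeries.coeff j (P ^ kl.1) * PowerSeries.coeff (m - j) (P ^ kl.2) := by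
            rw [← hn, pow_add, PowerSeries.coeff_mul,
              Finset.Nat.sum_antidiagonal_eq_sum_range_succ_mk]
          rw [hPm, Finset.mul_sum, Finset.sum_mul]
          apply Finset.sum_congr rfl
          intro j _
          rw [← hn, pow_add]
          ring
    -- end calc
  exact tendsto_nhds_unique (limLHS.congr' hEq) limC
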